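/- Let G be a finite DAG with a unique source s such that every node is reachable from s. For a random walk from s that at each node with out-degree d > 0 moves to a uniformly random successor, the output ∏_i (d_i / e_i) over visited nodes n_i — where d_i is the out-degree of n_i (taken as 1 at a sink) and e_i its in-degree (taken as 1 at the source) — is an unbiased estimator of the number of sinks of G. -/

import Mathlib

open Classical in
/-- Out-degree of a vertex in a finite directed graph. -/
noncomputable def outDeg {V : Type*} [Fintype V] (E : V → V → Prop) (v : V) : ℕ :=
  (Finset.univ.filter (fun u => E v u)).card

open Classical in
/-- In-degree of a vertex in a finite directed graph. -/
noncomputable def inDeg {V : Type*} [Fintype V] (E : V → V → Prop) (v : V) : ℕ :=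
  (Finset.univ.filter (fun u => E u v)).card

/-- A (complete) walk of Pitt's estimator: a nonempty list of vertices starting at
the source `s`, following edges of `E`, and ending at a sink. -/
def IsPittWalk {V : Type*} [Fintype V] (E : V → V → Prop) (s : V) (l : List V) : Prop :=
  l.head? = some s ∧ l.Chain' E ∧ ∀ w, l.getLast? = some w → outDeg E w = 0

/-- The probability of a given walk: at each non-final vertex the walk moves to a
uniformly random out-neighbor. -/
noncomputable def walkProb {V : Type*} [Fintype V] (E : V → V → Prop) (l : List V) : ℝ :=
  (l.dropLast.map (fun v => ((outDeg E v : ℝ))⁻¹)).prod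

/-- The output of Pitt's estimator along a walk: the product over all visited
vertices of (out-degree)/(in-degree), with the out-degree of a sink and the
in-degree of the source both taken to be `1`. -/
noncomputable def walkOutput {V : Type*} [Fintype V] (E : V → V → Prop) (l : List V) : ℝ :=
  (l.map (fun v =>
    ((if outDeg E v = 0 then 1 else (outDeg E v : ℝ))) /
    ((if inDeg E v = 0 then 1 else (inDeg E v : ℝ))))).prod

section PittAux

open Relation

variable {V : Type*} [Fintype V]

open Classical in
/-- In-degree as a real number, with the convention that it is `1` at in-degree `0`. -/
noncomputable def inDeg' (E : V → V → Prop) (v : V) : ℝ :=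
  if inDeg E v = 0 then 1 else (inDeg E v : ℝ)

/-- The product of inverse in-degrees over the tail of a list. -/
noncomputable def tailW (E : V → V → Prop) (l : List V) : ℝ :=
  (l.tail.map (fun u => (inDeg' E u)⁻¹)).prod

open Classical in
/-- The finite set of paths from `s` to `v`. -/
noncomputable def pathsTo (E : V → V → Prop) (s v : V) : Finset (List V) :=
  ((List.finite_length_le V (Fintype.card V)).toFinset).filter
    (fun l => l.head? = some s ∧ l.Chain' E ∧ l.getLast? = some v)

lemma chain'_nodup {E : V → V → Prop} (hacyclic : ∀ v, ¬ TransGen E v v)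
    {l : List V} (hl : l.Chain' E) : l.Nodup := by
  haveI : IsTrans V (TransGen E) := ⟨fun _ _ _ => TransGen.trans⟩
  have h2 : l.Chain' (TransGen E) := hl.imp (fun {a b} h => TransGen.single h)
  have hp : l.Pairwise (TransGen E) := List.isChain_iff_pairwise.mp h2
  refine List.Pairwise.imp ?_ hp
  intro a b h he
  exact hacyclic b (he ▸ h)

lemma mem_pathsTo {E : V → V → Prop} (hacyclic : ∀ v, ¬ TransGen E v v)
    {s v : V} {l : List V} :
    l ∈ pathsTo E s v ↔ l.head? = some s ∧ l.Chain' E ∧ l.getLast? = some v := by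
  classical
  constructor
  · intro h
    exact (Finset.mem_filter.mp h).2
  · intro h
    refine Finset.mem_filter.mpr ⟨?_, h⟩
    simp only [Set.Finite.mem_toFinset, Set.mem_setOf_eq]
    exact (chain'_nodup hacyclic h.2.1).length_le_card

lemma sum_pathsTo {E : V → V → Prop} {s : V}
    (hacyclic : ∀ v, ¬ TransGen E v v)
    (hsource : inDeg E s = 0)
    (huniqueSource : ∀ v, inDeg E v = 0 → v = s) (v : V) :
    ∑ l ∈ pathsTo E s v, tailW E l = 1 := by
  classical
  haveI : IsTrans V (TransGen E) := ⟨fun _ _ _ => TransGen.trans⟩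
  haveI : IsIrrefl V (TransGen E) := ⟨hacyclic⟩
  have wf : WellFounded (TransGen E) := Finite.wellFounded_of_trans_of_irrefl _
  induction v using WellFounded.induction wf with
  | _ v IH => ?_
  by_cases hv : v = s
  · rw [hv]
    have hset : pathsTo E s s = {[s]} := by
      ext l
      rw [mem_pathsTo hacyclic, Finset.mem_singleton]
      constructor
      · rintro ⟨hh, hc, hl⟩
        cases l with
        | nil => simp at hh
        | cons a t =>
          have ha : a = s := by simpa using hh
          subst ha
          cases t with
          | nil => rfl
          | cons b u =>
            exfalso
            have hnd := chain'_nodup hacyclic hc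
            rw [List.getLast?_cons_cons] at hl
            have hs : a ∈ b :: u := by
              obtain ⟨h1, h2⟩ := List.mem_getLast?_eq_getLast hl
              exact h2 ▸ List.getLast_mem h1
            exact (List.nodup_cons.mp hnd).1 hs
      · rintro rfl
        exact ⟨rfl, List.isChain_singleton s, rfl⟩
    rw [hset]
    simp [tailW]
  · have hin : inDeg E v ≠ 0 := fun h => hv (huniqueSource v h)
    have hinR : (inDeg E v : ℝ) ≠ 0 := Nat.cast_ne_zero.mpr hin
    have hset : pathsTo E s v =
        (Finset.univ.filter (fun u => E u v)).biUnion
          (fun u => (pathsTo E s u).image (fun l => l ++ [v])) := by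
      ext l
      simp only [Finset.mem_biUnion, Finset.mem_image, Finset.mem_filter, Finset.mem_univ,
        true_and]
      rw [mem_pathsTo hacyclic]
      constructor
      · rintro ⟨hh, hc, hl⟩
        have hne : l ≠ [] := by rintro rfl; simp at hh
        have hlast : l.getLast hne = v := by
          rw [List.getLast?_eq_getLast hne, Option.some_inj] at hl
          exact hl
        have hsplit : l.dropLast ++ [v] = l := by
          conv_lhs => rw [← hlast]
          exact List.dropLast_concat_getLast hne
        have hdne : l.dropLast ≠ [] := by
          intro h0
          have hlv : l = [v] := by rw [← hsplit, h0]; rfl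
          rw [hlv] at hh
          exact hv (by simpa using hh)
        rw [← hsplit] at hc
        obtain ⟨hc1, hc2, hc3⟩ := List.isChain_append.mp hc
        have hgl : l.dropLast.getLast? = some (l.dropLast.getLast hdne) :=
          List.getLast?_eq_getLast hdne
        refine ⟨l.dropLast.getLast hdne, hc3 _ hgl v rfl, l.dropLast, ?_, hsplit⟩
        rw [mem_pathsTo hacyclic]
        refine ⟨?_, hc1, hgl⟩
        rw [← hsplit] at hh
        rwa [List.head?_append_of_ne_nil _ hdne] at hh
      · rintro ⟨u, hEu, l', hl', rfl⟩
        rw [mem_pathsTo hacyclic] at hl'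
        obtain ⟨hh, hc, hl⟩ := hl'
        have hne : l' ≠ [] := by rintro rfl; simp at hh
        refine ⟨by rw [List.head?_append_of_ne_nil _ hne]; exact hh, ?_,
          List.getLast?_concat⟩
        refine List.isChain_append.mpr ⟨hc, List.isChain_singleton v, ?_⟩
        intro x hx y hy
        have hxu : x = u := by rw [hl] at hx; exact Option.some_inj.mp hx.symm ▸ rfl
        have hyv : y = v := (show v = y by simpa using hy).symm
        rw [hxu, hyv]
        exact hEu
    have hdisj : ∀ u ∈ Finset.univ.filter (fun u => E u v),
        ∀ u' ∈ Finset.univ.filter (fun u => E u v), u ≠ u' →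
        Disjoint ((pathsTo E s u).image (fun l => l ++ [v]))
          ((pathsTo E s u').image (fun l => l ++ [v])) := by
      intro u _ u' _ huu
      rw [Finset.disjoint_left]
      rintro l hl1 hl2
      obtain ⟨a, ha, rfl⟩ := Finset.mem_image.mp hl1
      obtain ⟨b, hb, hba⟩ := Finset.mem_image.mp hl2
      have hab : b = a := by
        have := congrArg List.dropLast hba
        simpa using this
      subst hab
      rw [mem_pathsTo hacyclic] at ha hb
      have : some u = some u' := by rw [← ha.2.2, hb.2.2]
      exact huu (Option.some_inj.mp this)
    rw [hset, Finset.sum_biUnion hdisj]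
    have hinj : ∀ u, ∀ a ∈ pathsTo E s u, ∀ b ∈ pathsTo E s u,
        a ++ [v] = b ++ [v] → a = b := by
      intro u a _ b _ h
      have := congrArg List.dropLast h
      simpa using this
    have htail : ∀ u, E u v → ∀ l' ∈ pathsTo E s u,
        tailW E (l' ++ [v]) = tailW E l' * (inDeg E v : ℝ)⁻¹ := by
      intro u hEu l' hl'
      rw [mem_pathsTo hacyclic] at hl'
      have hne : l' ≠ [] := by rintro rfl; simp at hl'
      obtain ⟨a, t, rfl⟩ := List.exists_cons_of_ne_nil hne
      have hIv : inDeg' E v = (inDeg E v : ℝ) := by simp [inDeg', hin]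
      simp [tailW, hIv]
    have hsum : ∀ u ∈ Finset.univ.filter (fun u => E u v),
        ∑ l ∈ (pathsTo E s u).image (fun l => l ++ [v]), tailW E l
          = (inDeg E v : ℝ)⁻¹ := by
      intro u hu
      have hEu : E u v := (Finset.mem_filter.mp hu).2
      rw [Finset.sum_image (hinj u), Finset.sum_congr rfl (htail u hEu),
        ← Finset.sum_mul, IH u (TransGen.single hEu), one_mul]
    rw [Finset.sum_congr rfl hsum, Finset.sum_const]
    have hcard : (Finset.univ.filter (fun u => E u v)).card = inDeg E v := by
      simp [inDeg]
    rw [hcard, nsmul_eq_mul, mul_inv_cancel₀ hinR]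

lemma outDeg_ne_zero {E : V → V → Prop} {a b : V} (h : E a b) : outDeg E a ≠ 0 := by
  classical
  unfold outDeg
  intro hc
  exact absurd (Finset.card_eq_zero.mp hc ▸ Finset.mem_filter.mpr ⟨Finset.mem_univ b, h⟩)
    (Finset.notMem_empty b)

lemma inDeg_ne_zero {E : V → V → Prop} {a b : V} (h : E a b) : inDeg E b ≠ 0 := by
  classical
  unfold inDeg
  intro hc
  exact absurd (Finset.card_eq_zero.mp hc ▸ Finset.mem_filter.mpr ⟨Finset.mem_univ a, h⟩)
    (Finset.notMem_empty a)

lemma walk_weight_aux {E : V → V → Prop} :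
    ∀ (l : List V) (a : V), (a :: l).Chain' E →
      (∀ w, (a :: l).getLast? = some w → outDeg E w = 0) →
      walkProb E (a :: l) * walkOutput E (a :: l)
        = (inDeg' E a)⁻¹ * (l.map (fun u => (inDeg' E u)⁻¹)).prod := by
  intro l
  induction l with
  | nil =>
    intro a _ hlast
    have h0 : outDeg E a = 0 := hlast a rfl
    simp [walkProb, walkOutput, inDeg', h0, one_div]
  | cons b t IH =>
    intro a hchain hlast
    have hE : E a b := (List.isChain_cons_cons.mp hchain).1
    have hch : (b :: t).Chain' E := (List.isChain_cons_cons.mp hchain).2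
    have hout : outDeg E a ≠ 0 := outDeg_ne_zero hE
    have houtR : (outDeg E a : ℝ) ≠ 0 := Nat.cast_ne_zero.mpr hout
    have hIH := IH b hch (fun w hw => hlast w (by simpa using hw))
    have h1 : walkProb E (a :: b :: t) = (outDeg E a : ℝ)⁻¹ * walkProb E (b :: t) := by
      simp [walkProb]
    have h2 : walkOutput E (a :: b :: t)
        = ((outDeg E a : ℝ) / inDeg' E a) * walkOutput E (b :: t) := by
      simp [walkOutput, inDeg', hout]
    rw [h1, h2]
    have : (outDeg E a : ℝ)⁻¹ * walkProb E (b :: t) * ((outDeg E a : ℝ) / inDeg' E a * walkOutput E (b :: t))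
        = (inDeg' E a)⁻¹ * (walkProb E (b :: t) * walkOutput E (b :: t)) := by
      rw [div_eq_mul_inv, show (outDeg E a : ℝ)⁻¹ * walkProb E (b :: t) *
          ((outDeg E a : ℝ) * (inDeg' E a)⁻¹ * walkOutput E (b :: t))
          = ((outDeg E a : ℝ)⁻¹ * (outDeg E a : ℝ)) *
            ((inDeg' E a)⁻¹ * (walkProb E (b :: t) * walkOutput E (b :: t))) from by ring,
        inv_mul_cancel₀ houtR, one_mul]
    rw [this, hIH]
    simp [mul_assoc]

lemma walk_weight {E : V → V → Prop} {s : V}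
    (hsource : inDeg E s = 0) {l : List V} (hl : IsPittWalk E s l) :
    walkProb E l * walkOutput E l = tailW E l := by
  obtain ⟨hhead, hchain, hlast⟩ := hl
  cases l with
  | nil => simp at hhead
  | cons a t =>
    have ha : a = s := by simpa using hhead
    subst ha
    have h1 : inDeg' E a = 1 := by simp [inDeg', hsource]
    rw [walk_weight_aux t a hchain hlast, tailW, h1]
    simp

end PittAux

open Classical in
/-- **Pitt's estimator is unbiased**: let `G = (V, E)` be a finite DAG with a
unique source `s` (in-degree `0`) from which every vertex is reachable.  For the
random walk from `s` that at each vertex moves to a uniformly random successor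
until reaching a sink, the expected value of the output
`∏ᵢ dᵢ / eᵢ` (out-degree over in-degree, with the stated conventions) equals the
number of sinks of `G`. -/
theorem pitt_estimator_unbiased (V : Type*) [Fintype V]
    (E : V → V → Prop) (s : V)
    (hacyclic : ∀ v, ¬ Relation.TransGen E v v)
    (hsource : inDeg E s = 0)
    (hreach : ∀ v, Relation.ReflTransGen E s v)
    (huniqueSource : ∀ v, inDeg E v = 0 → v = s) :
    ∑' l : {l : List V // IsPittWalk E s l}, walkProb E l.1 * walkOutput E l.1
      = ((Finset.univ.filter (fun v => outDeg E v = 0)).card : ℝ) := by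
  classical
  have hfin : {l : List V | IsPittWalk E s l}.Finite :=
    (List.finite_length_le V (Fintype.card V)).subset
      (fun l hl => (chain'_nodup hacyclic hl.2.1).length_le_card)
  haveI : Fintype {l : List V // IsPittWalk E s l} := hfin.fintype
  haveI : Fintype ↥{l : List V | IsPittWalk E s l} := hfin.fintype
  rw [tsum_fintype]
  have hstep : ∑ l : {l : List V // IsPittWalk E s l}, walkProb E l.1 * walkOutput E l.1
      = ∑ l ∈ hfin.toFinset, walkProb E l * walkOutput E l := by
    exact (Finset.sum_subtype hfin.toFinset (fun l => hfin.mem_toFinset)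
      (fun l => walkProb E l * walkOutput E l)).symm
  rw [hstep]
  have hset : hfin.toFinset
      = (Finset.univ.filter (fun t => outDeg E t = 0)).biUnion (fun t => pathsTo E s t) := by
    ext l
    simp only [Set.Finite.mem_toFinset, Set.mem_setOf_eq, Finset.mem_biUnion, Finset.mem_filter,
      Finset.mem_univ, true_and]
    constructor
    · rintro ⟨hh, hc, hl⟩
      have hne : l ≠ [] := by rintro rfl; simp at hh
      refine ⟨l.getLast hne, hl _ (List.getLast?_eq_getLast hne), ?_⟩
      rw [mem_pathsTo hacyclic]
      exact ⟨hh, hc, List.getLast?_eq_getLast hne⟩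
    · rintro ⟨t, ht, hl⟩
      rw [mem_pathsTo hacyclic] at hl
      refine ⟨hl.1, hl.2.1, fun w hw => ?_⟩
      rw [hl.2.2] at hw
      exact (Option.some_inj.mp hw) ▸ ht
  have hdisj : ∀ t ∈ Finset.univ.filter (fun t => outDeg E t = 0),
      ∀ t' ∈ Finset.univ.filter (fun t => outDeg E t = 0), t ≠ t' →
      Disjoint (pathsTo E s t) (pathsTo E s t') := by
    intro t _ t' _ htt
    rw [Finset.disjoint_left]
    intro l hl1 hl2
    rw [mem_pathsTo hacyclic] at hl1 hl2
    have : some t = some t' := by rw [← hl1.2.2, hl2.2.2]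
    exact htt (Option.some_inj.mp this)
  rw [hset, Finset.sum_biUnion hdisj]
  have hone : ∀ t ∈ Finset.univ.filter (fun t => outDeg E t = 0),
      ∑ l ∈ pathsTo E s t, walkProb E l * walkOutput E l = 1 := by
    intro t ht
    have hsink : outDeg E t = 0 := (Finset.mem_filter.mp ht).2
    have hcongr : ∀ l ∈ pathsTo E s t, walkProb E l * walkOutput E l = tailW E l := by
      intro l hl
      rw [mem_pathsTo hacyclic] at hl
      refine walk_weight hsource ⟨hl.1, hl.2.1, fun w hw => ?_⟩
      rw [hl.2.2] at hw
      exact (Option.some_inj.mp hw) ▸ hsink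
    rw [Finset.sum_congr rfl hcongr]
    exact sum_pathsTo hacyclic hsource huniqueSource t
  rw [Finset.sum_congr rfl hone, Finset.sum_const, nsmul_eq_mul, mul_one]
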